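/- For every natural number k: ∫_{−2}^{2} t^{2k} · √(4 − t²)/(2π) dt = catalan(k), and ∫_{−2}^{2} t^{2k+1} · √(4 − t²)/(2π) dt = 0. That is, the moments of the standard Wigner semicircle distribution are the Catalan numbers. -/

import Mathlib

open intervalIntegral

open Real Set in
private lemma catalan_rec' (k : ℕ) :
    (k + 2) * catalan (k + 1) = 2 * (2 * k + 1) * catalan k := by
  have h1 : (k + 2) * catalan (k + 1) = Nat.centralBinom (k + 1) := by
    simpa [add_assoc] using succ_mul_catalan_eq_centralBinom (k + 1)
  have h2 := Nat.succ_mul_centralBinom_succ k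
  have h3 := succ_mul_catalan_eq_centralBinom k
  refine Nat.eq_of_mul_eq_mul_left (Nat.succ_pos k) ?_
  simp only [Nat.succ_eq_add_one]
  rw [h1, h2, ← h3]; ring

open Real in
private lemma catalan_recR (k : ℕ) :
    ((k : ℝ) + 2) * (catalan (k + 1) : ℝ) = 2 * (2 * (k : ℝ) + 1) * (catalan k : ℝ) := by
  exact_mod_cast catalan_rec' k

open Real in
private lemma sin_pow_even_int (k : ℕ) :
    (∫ x in (-(π/2))..(π/2), sin x ^ (2 * k)) = π * (k + 1) * catalan k / 4 ^ k := by
  induction k with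
  | zero => simp
  | succ k ih =>
    have h := integral_sin_pow (a := -(π/2)) (b := π/2) (2 * k)
    rw [show 2 * (k + 1) = 2 * k + 2 by ring, h, ih]
    have hc := catalan_recR k
    simp only [Real.cos_pi_div_two, Real.cos_neg, mul_zero, zero_mul, sub_zero, zero_sub,
      neg_zero, zero_div, zero_add]
    push_cast
    have h4 : (4 : ℝ) ^ (k + 1) = 4 * 4 ^ k := by rw [pow_succ]; ring
    rw [h4]
    have hk2 : (2 * (k : ℝ) + 2) ≠ 0 := by positivity
    have h4k : (4 : ℝ) ^ k ≠ 0 := by positivity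
    field_simp
    linear_combination (-2) * hc

open Real in
private lemma key_trig_int (k : ℕ) :
    (∫ x in (-(π/2))..(π/2), sin x ^ (2 * k) * cos x ^ 2)
      = π * catalan k / (2 * 4 ^ k) := by
  have hsub : ∀ x : ℝ, sin x ^ (2 * k) * cos x ^ 2
      = sin x ^ (2 * k) - sin x ^ (2 * (k + 1)) := by
    intro x; rw [cos_sq']; ring
  rw [intervalIntegral.integral_congr (fun x _ => hsub x),
    intervalIntegral.integral_sub (f := fun x => sin x ^ (2 * k)) (g := fun x => sin x ^ (2 * (k + 1)))
      ((continuous_sin.pow _).intervalIntegrable _ _)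
      ((continuous_sin.pow _).intervalIntegrable _ _),
    sin_pow_even_int, sin_pow_even_int]
  have hc := catalan_recR k
  push_cast
  have h4 : (4 : ℝ) ^ (k + 1) = 4 * 4 ^ k := by rw [pow_succ]; ring
  rw [h4]
  have h4k : (4 : ℝ) ^ k ≠ 0 := by positivity
  field_simp
  linear_combination (-2) * hc

open Real in
private lemma even_int (k : ℕ) :
    (∫ t in (-2 : ℝ)..2, t ^ (2 * k) * Real.sqrt (4 - t ^ 2)) = 2 * π * catalan k := by
  have hd : ∀ x ∈ Set.uIcc (-(π/2)) (π/2),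
      HasDerivAt (fun θ : ℝ => 2 * sin θ) (2 * cos x) x :=
    fun x _ => (Real.hasDerivAt_sin x).const_mul 2
  have hg : Continuous fun t : ℝ => t ^ (2 * k) * Real.sqrt (4 - t ^ 2) := by fun_prop
  have hsub := intervalIntegral.integral_comp_mul_deriv hd (by fun_prop) hg
  simp only [Real.sin_pi_div_two, Real.sin_neg, mul_neg, mul_one] at hsub
  rw [← hsub]
  have hcongr : Set.EqOn
      (fun x => ((fun t : ℝ => t ^ (2 * k) * Real.sqrt (4 - t ^ 2)) ∘ fun θ => 2 * sin θ) x
        * (2 * cos x))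
      (fun x => 4 ^ (k + 1) * (sin x ^ (2 * k) * cos x ^ 2))
      (Set.uIcc (-(π/2)) (π/2)) := by
    intro x hx
    rw [Set.uIcc_of_le (by linarith [Real.pi_pos])] at hx
    have hcos : 0 ≤ cos x := Real.cos_nonneg_of_mem_Icc hx
    have hs : Real.sqrt (4 - (2 * sin x) ^ 2) = 2 * cos x := by
      rw [show (4 : ℝ) - (2 * sin x) ^ 2 = (2 * cos x) ^ 2 by
        nlinarith [Real.sin_sq_add_cos_sq x]]
      exact Real.sqrt_sq (by positivity)
    simp only [Function.comp_apply]
    rw [hs, mul_pow]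
    have h4 : (4 : ℝ) ^ (k + 1) = 2 ^ (2 * k) * 4 := by
      rw [show (4 : ℝ) = 2 ^ 2 by norm_num, ← pow_mul, show 2 * (k + 1) = 2 * k + 2 by ring,
        pow_add]
    rw [h4]; ring
  rw [intervalIntegral.integral_congr hcongr, intervalIntegral.integral_const_mul, key_trig_int]
  have h4 : (4 : ℝ) ^ (k + 1) = 4 * 4 ^ k := by rw [pow_succ]; ring
  have h4k : (4 : ℝ) ^ k ≠ 0 := by positivity
  rw [h4]
  field_simp
  ring

/-- The moments of the standard Wigner semicircle distribution (density `√(4−t²)/(2π)`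
on `[−2,2]`) are the Catalan numbers: the `2k`-th moment is `catalan k` and the odd
moments vanish. -/
theorem semicircle_moments (k : ℕ) :
    (∫ t in (-2 : ℝ)..2, t ^ (2 * k) * Real.sqrt (4 - t ^ 2) / (2 * Real.pi) =
      catalan k) ∧
    ∫ t in (-2 : ℝ)..2, t ^ (2 * k + 1) * Real.sqrt (4 - t ^ 2) / (2 * Real.pi) = 0 := by
  constructor
  · rw [intervalIntegral.integral_div, even_int]
    field_simp
  · have h := intervalIntegral.integral_comp_neg (a := (-2 : ℝ)) (b := 2)
      (fun t => t ^ (2 * k + 1) * Real.sqrt (4 - t ^ 2) / (2 * Real.pi))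
    have hneg : ∀ x : ℝ, (-x) ^ (2 * k + 1) * Real.sqrt (4 - (-x) ^ 2) / (2 * Real.pi)
        = -(x ^ (2 * k + 1) * Real.sqrt (4 - x ^ 2) / (2 * Real.pi)) := by
      intro x
      rw [Odd.neg_pow ⟨k, by ring⟩, neg_sq]
      ring
    simp only [neg_neg] at h
    simp only [hneg] at h
    rw [intervalIntegral.integral_neg] at h
    linarith
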